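/- arXiv:2008.10547 — 3 statements merged into one kernel-verified Lean document; each statement's English description precedes it below -/
import Mathlib

section
/- For every n = 1, …, N, the infinitesimal-jackknife and Newton-step estimates satisfy ‖θ̂_{IJ,∖n} − θ̂_{NS,∖n}‖₂ ≤ (1/(N² λ²)) · |D_n^{(1)}| · D_n^{(2)} · ‖x_n‖₂³; consequently |x_nᵀ θ̂_{IJ,∖n} − x_nᵀ θ̂_{NS,∖n}| ≤ (1/(N² λ²)) · |D_n^{(1)}| · D_n^{(2)} · ‖x_n‖₂⁴. -/
open Matrix BigOperators RealInnerProductSpace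

lemma aux_dot_self_nonneg {D : ℕ} (v : Fin D → ℝ) : 0 ≤ v ⬝ᵥ v :=
  Finset.sum_nonneg fun _ _ => mul_self_nonneg _

lemma aux_abs_dot_le {D : ℕ} (v w : Fin D → ℝ) :
    |v ⬝ᵥ w| ≤ Real.sqrt (v ⬝ᵥ v) * Real.sqrt (w ⬝ᵥ w) := by
  have h := Finset.sum_mul_sq_le_sq_mul_sq Finset.univ v w
  have hv : ∑ i, v i ^ 2 = v ⬝ᵥ v := by simp [dotProduct, sq]
  have hw : ∑ i, w i ^ 2 = w ⬝ᵥ w := by simp [dotProduct, sq]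
  calc |v ⬝ᵥ w| = Real.sqrt ((v ⬝ᵥ w) ^ 2) := (Real.sqrt_sq_eq_abs _).symm
    _ ≤ Real.sqrt ((v ⬝ᵥ v) * (w ⬝ᵥ w)) := Real.sqrt_le_sqrt (by rw [← hv, ← hw]; exact h)
    _ = _ := Real.sqrt_mul (aux_dot_self_nonneg v) _

lemma aux_deriv_nonneg_of_monotone {g : ℝ → ℝ} (hm : Monotone g) {z : ℝ}
    (hd : DifferentiableAt ℝ g z) : 0 ≤ deriv g z := by
  have ht : Filter.Tendsto (slope g z) (nhdsWithin z (Set.Ioi z)) (nhds (deriv g z)) :=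
    (hasDerivAt_iff_tendsto_slope.mp hd.hasDerivAt).mono_left
      (nhdsWithin_mono z fun y hy => Set.mem_compl_singleton_iff.mpr (ne_of_gt hy))
  refine ge_of_tendsto ht ?_
  filter_upwards [self_mem_nhdsWithin] with y hy
  have hzy : z < y := hy
  rw [slope_def_field]
  exact div_nonneg (sub_nonneg.mpr (hm hzy.le)) (sub_nonneg.mpr hzy.le)

lemma aux_second_deriv_nonneg {g : ℝ → ℝ} (hc : ConvexOn ℝ Set.univ g)
    (hs : ContDiff ℝ 2 g) (z : ℝ) : 0 ≤ iteratedDeriv 2 g z := by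
  have hdiff : Differentiable ℝ g := hs.differentiable (by norm_num)
  have hs' : ContDiff ℝ (1 + 1) g := by
    rw [show ((1 : WithTop ℕ∞) + 1) = 2 by norm_num]; exact hs
  have hd1 : ContDiff ℝ 1 (deriv g) := (contDiff_succ_iff_deriv.mp hs').2.2
  have hmono : Monotone (deriv g) := by
    rw [← monotoneOn_univ]
    exact hc.monotoneOn_deriv (fun x _ => hdiff x)
  rw [show (2 : ℕ) = 1 + 1 from rfl, iteratedDeriv_succ, iteratedDeriv_one]
  exact aux_deriv_nonneg_of_monotone hmono ((hd1.differentiable one_ne_zero) z)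

lemma aux_vecMulVec_mulVec {D : ℕ} (v w u : Fin D → ℝ) :
    Matrix.vecMulVec v w *ᵥ u = (w ⬝ᵥ u) • v := by
  ext i
  simp only [Matrix.mulVec, dotProduct, Matrix.vecMulVec_apply, Pi.smul_apply,
    smul_eq_mul, Finset.sum_mul]
  exact Finset.sum_congr rfl fun j _ => by ring

lemma aux_sum_mulVec {D : ℕ} {ι : Type*} (s : Finset ι) (M : ι → Matrix (Fin D) (Fin D) ℝ)
    (v : Fin D → ℝ) : (∑ i ∈ s, M i) *ᵥ v = ∑ i ∈ s, M i *ᵥ v := by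
  ext j
  simp only [Matrix.mulVec, dotProduct, Finset.sum_apply, Matrix.sum_apply,
    Finset.sum_mul]
  rw [Finset.sum_comm]

lemma aux_reg_posdef {D : ℕ} {A : Matrix (Fin D) (Fin D) ℝ}
    (hsym : Aᵀ = A) (hpsd : ∀ w : Fin D → ℝ, 0 ≤ w ⬝ᵥ (A *ᵥ w))
    {lam : ℝ} (hlam : 0 < lam) {M : Matrix (Fin D) (Fin D) ℝ}
    (hM : M = A + lam • 1) : M.PosDef := by
  rw [Matrix.posDef_iff_dotProduct_mulVec]
  constructor
  · show Mᴴ = M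
    have hMsym : Mᵀ = M := by
      rw [hM, Matrix.transpose_add, Matrix.transpose_smul, Matrix.transpose_one, hsym]
    ext i j
    rw [Matrix.conjTranspose_apply, star_trivial, ← Matrix.transpose_apply M i j, hMsym]
  · intro z hz
    have hstar : star z = z := by funext i; exact star_trivial _
    rw [hstar, hM, Matrix.add_mulVec, dotProduct_add, Matrix.smul_mulVec,
      Matrix.one_mulVec, dotProduct_smul, smul_eq_mul]
    have hzz : 0 < z ⬝ᵥ z := by
      rcases lt_or_eq_of_le (aux_dot_self_nonneg z) with h | h
      · exact h
      · exact absurd (dotProduct_self_eq_zero.mp h.symm) hz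
    have := hpsd z
    nlinarith

lemma aux_inv_facts {D : ℕ} {M : Matrix (Fin D) (Fin D) ℝ} (hpd : M.PosDef) :
    (∀ v, M *ᵥ (M⁻¹ *ᵥ v) = v) ∧ (∀ v, M⁻¹ *ᵥ (M *ᵥ v) = v) := by
  have hu : IsUnit M.det := (Matrix.isUnit_iff_isUnit_det M).mp hpd.isUnit
  constructor
  · intro v; rw [Matrix.mulVec_mulVec, Matrix.mul_nonsing_inv M hu, Matrix.one_mulVec]
  · intro v; rw [Matrix.mulVec_mulVec, Matrix.nonsing_inv_mul M hu, Matrix.one_mulVec]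

lemma aux_inv_norm_bound {D : ℕ} {A M : Matrix (Fin D) (Fin D) ℝ}
    (hpsd : ∀ w : Fin D → ℝ, 0 ≤ w ⬝ᵥ (A *ᵥ w))
    {lam : ℝ} (hlam : 0 < lam) (hM : M = A + lam • 1)
    (hMul : ∀ v, M *ᵥ (M⁻¹ *ᵥ v) = v) (v : Fin D → ℝ) :
    Real.sqrt ((M⁻¹ *ᵥ v) ⬝ᵥ (M⁻¹ *ᵥ v)) ≤ Real.sqrt (v ⬝ᵥ v) / lam := by
  set w := M⁻¹ *ᵥ v with hw
  have hMw : M *ᵥ w = v := hMul v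
  have hq : lam * (w ⬝ᵥ w) ≤ w ⬝ᵥ v := by
    rw [← hMw, hM, Matrix.add_mulVec, dotProduct_add, Matrix.smul_mulVec,
      Matrix.one_mulVec, dotProduct_smul, smul_eq_mul]
    linarith [hpsd w]
  set a := Real.sqrt (w ⬝ᵥ w) with ha
  set b := Real.sqrt (v ⬝ᵥ v) with hb
  have ha2 : a ^ 2 = w ⬝ᵥ w := Real.sq_sqrt (aux_dot_self_nonneg w)
  have hann : 0 ≤ a := Real.sqrt_nonneg _
  have hbnn : 0 ≤ b := Real.sqrt_nonneg _
  have hcs : w ⬝ᵥ v ≤ a * b := le_trans (le_abs_self _) (aux_abs_dot_le w v)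
  rcases eq_or_lt_of_le hann with h0 | h0
  · rw [← h0]; positivity
  · rw [le_div_iff₀ hlam]
    have : lam * a ^ 2 ≤ a * b := by rw [ha2]; linarith
    nlinarith

theorem stmt_9
    (N D : ℕ) (hN : 1 ≤ N) (hD : 1 ≤ D)
    (x : Fin N → Fin D → ℝ) (y : Fin N → ℝ)
    (lam : ℝ) (hlam : 0 < lam)
    (f : ℝ → ℝ → ℝ)
    (hconv : ∀ c : ℝ, ConvexOn ℝ Set.univ (fun z => f z c))
    (hsmooth : ∀ c : ℝ, ContDiff ℝ 2 (fun z => f z c))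
    (F : (Fin D → ℝ) → ℝ)
    (hF : F = fun θ => (1 / N : ℝ) * ∑ n, f (x n ⬝ᵥ θ) (y n) + lam / 2 * (θ ⬝ᵥ θ))
    (θhat : Fin D → ℝ)
    (hθhat : ∀ θ, F θhat ≤ F θ)
    (hθhatU : ∀ θ, (∀ θ', F θ ≤ F θ') → θ = θhat)
    (D1 : Fin N → ℝ)
    (hD1 : ∀ n, D1 n = deriv (fun z => f z (y n)) (x n ⬝ᵥ θhat))
    (D2 : Fin N → ℝ)
    (hD2 : ∀ n, D2 n = iteratedDeriv 2 (fun z => f z (y n)) (x n ⬝ᵥ θhat))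
    (H : Matrix (Fin D) (Fin D) ℝ)
    (hH : H = (1 / N : ℝ) • ∑ m, D2 m • Matrix.vecMulVec (x m) (x m) + lam • 1)
    (Hloo : Fin N → Matrix (Fin D) (Fin D) ℝ)
    (hHloo : ∀ n, Hloo n =
      (1 / N : ℝ) • ∑ m ∈ Finset.univ.erase n, D2 m • Matrix.vecMulVec (x m) (x m) + lam • 1)
    (θIJ : Fin N → Fin D → ℝ)
    (hθIJ : ∀ n, θIJ n = θhat + (D1 n / N) • (H⁻¹ *ᵥ x n))
    (θNS : Fin N → Fin D → ℝ)
    (hθNS : ∀ n, θNS n = θhat + (D1 n / N) • ((Hloo n)⁻¹ *ᵥ x n))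
    :
    ∀ n : Fin N,
      Real.sqrt ((θIJ n - θNS n) ⬝ᵥ (θIJ n - θNS n)) ≤
        1 / (N ^ 2 * lam ^ 2) * (|D1 n| * D2 n * Real.sqrt (x n ⬝ᵥ x n) ^ 3) ∧
      |x n ⬝ᵥ θIJ n - x n ⬝ᵥ θNS n| ≤
        1 / (N ^ 2 * lam ^ 2) * (|D1 n| * D2 n * (x n ⬝ᵥ x n) ^ 2) := by
  intro n
  have hNpos : (0 : ℝ) < N := by exact_mod_cast hN
  have hD2nonneg : ∀ m, 0 ≤ D2 m := fun m => by
    rw [hD2 m]; exact aux_second_deriv_nonneg (hconv (y m)) (hsmooth (y m)) _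
  -- the two base matrices
  set A : Matrix (Fin D) (Fin D) ℝ :=
    (1 / N : ℝ) • ∑ m, D2 m • Matrix.vecMulVec (x m) (x m) with hA
  set B : Matrix (Fin D) (Fin D) ℝ :=
    (1 / N : ℝ) • ∑ m ∈ Finset.univ.erase n, D2 m • Matrix.vecMulVec (x m) (x m) with hB
  have hAH : H = A + lam • 1 := hH
  have hBH : Hloo n = B + lam • 1 := hHloo n
  -- symmetry of the pieces
  have hvvT : ∀ m, (Matrix.vecMulVec (x m) (x m))ᵀ = Matrix.vecMulVec (x m) (x m) := by
    intro m; ext i j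
    simp [Matrix.transpose_apply, Matrix.vecMulVec_apply, mul_comm]
  have hsymgen : ∀ s : Finset (Fin N),
      ((1 / N : ℝ) • ∑ m ∈ s, D2 m • Matrix.vecMulVec (x m) (x m))ᵀ
        = (1 / N : ℝ) • ∑ m ∈ s, D2 m • Matrix.vecMulVec (x m) (x m) := by
    intro s
    rw [Matrix.transpose_smul, Matrix.transpose_sum]
    congr 1
    exact Finset.sum_congr rfl fun m _ => by rw [Matrix.transpose_smul, hvvT]
  -- positive semidefiniteness of the pieces
  have hpsdgen : ∀ s : Finset (Fin N), ∀ w : Fin D → ℝ,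
      0 ≤ w ⬝ᵥ (((1 / N : ℝ) • ∑ m ∈ s, D2 m • Matrix.vecMulVec (x m) (x m)) *ᵥ w) := by
    intro s w
    rw [Matrix.smul_mulVec, dotProduct_smul, smul_eq_mul]
    refine mul_nonneg (by positivity) ?_
    rw [aux_sum_mulVec]
    have hds : w ⬝ᵥ (∑ m ∈ s, (D2 m • Matrix.vecMulVec (x m) (x m)) *ᵥ w)
        = ∑ m ∈ s, w ⬝ᵥ ((D2 m • Matrix.vecMulVec (x m) (x m)) *ᵥ w) := by
      simp [dotProduct, Finset.sum_apply, Finset.mul_sum]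
      exact Finset.sum_comm
    rw [hds]
    refine Finset.sum_nonneg fun m _ => ?_
    rw [Matrix.smul_mulVec, dotProduct_smul, smul_eq_mul,
      aux_vecMulVec_mulVec, dotProduct_smul, smul_eq_mul, dotProduct_comm]
    have := sq_nonneg (x m ⬝ᵥ w)
    nlinarith [hD2nonneg m]
  have hApd : H.PosDef := aux_reg_posdef (hsymgen _) (hpsdgen _) hlam hAH
  have hBpd : (Hloo n).PosDef := aux_reg_posdef (hsymgen _) (hpsdgen _) hlam hBH
  obtain ⟨hHmul, hHmul'⟩ := aux_inv_facts hApd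
  obtain ⟨hLmul, hLmul'⟩ := aux_inv_facts hBpd
  set v := x n with hv
  set u := H⁻¹ *ᵥ v with hu
  set w := (Hloo n)⁻¹ *ᵥ v with hwdef
  -- split H = Hloo n + (D2 n / N) • v vᵀ
  have hsplit : H = Hloo n + (D2 n / N) • Matrix.vecMulVec v v := by
    rw [hAH, hBH, hA, hB, ← Finset.sum_erase_add _ _ (Finset.mem_univ n), smul_add, smul_smul,
      one_div_mul_eq_div]
    abel
  -- key identity
  set c : ℝ := (D2 n / N) * (v ⬝ᵥ u) with hc
  have hkey : w - u = c • w := by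
    have h1 : Hloo n *ᵥ (w - u) = c • v := by
      rw [Matrix.mulVec_sub, hLmul v]
      have h2 : Hloo n *ᵥ u = v - c • v := by
        have hthis : H *ᵥ u = v := hHmul v
        rw [hsplit, Matrix.add_mulVec, Matrix.smul_mulVec, aux_vecMulVec_mulVec]
          at hthis
        have h3 : Hloo n *ᵥ u = v - (D2 n / (N : ℝ)) • (v ⬝ᵥ u) • v :=
          eq_sub_of_add_eq hthis
        rw [h3, smul_smul]
      rw [h2]
      abel
    calc w - u = (Hloo n)⁻¹ *ᵥ (Hloo n *ᵥ (w - u)) := (hLmul' _).symm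
      _ = (Hloo n)⁻¹ *ᵥ (c • v) := by rw [h1]
      _ = c • w := by rw [Matrix.mulVec_smul]
  -- the difference vector
  have hdiff : θIJ n - θNS n = (-(D1 n / N) * c) • w := by
    rw [hθIJ n, hθNS n]
    have : θhat + (D1 n / N) • u - (θhat + (D1 n / N) • w)
        = (D1 n / N) • (u - w) := by
      rw [smul_sub]; abel
    rw [this, show u - w = -(c • w) by rw [← hkey]; abel, smul_neg, smul_smul]
    rw [neg_mul]
    exact (neg_smul _ _).symm
  -- norms
  set s := Real.sqrt (v ⬝ᵥ v) with hs
  have hsnn : 0 ≤ s := Real.sqrt_nonneg _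
  have hs2 : s ^ 2 = v ⬝ᵥ v := Real.sq_sqrt (aux_dot_self_nonneg v)
  have hub : Real.sqrt (u ⬝ᵥ u) ≤ s / lam :=
    aux_inv_norm_bound (hpsdgen _) hlam hAH hHmul v
  have hwb : Real.sqrt (w ⬝ᵥ w) ≤ s / lam :=
    aux_inv_norm_bound (hpsdgen _) hlam hBH hLmul v
  have hvu : |v ⬝ᵥ u| ≤ s * (s / lam) := by
    calc |v ⬝ᵥ u| ≤ s * Real.sqrt (u ⬝ᵥ u) := aux_abs_dot_le v u
      _ ≤ s * (s / lam) := by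
        exact mul_le_mul_of_nonneg_left hub hsnn
  have hnormdiff : Real.sqrt ((θIJ n - θNS n) ⬝ᵥ (θIJ n - θNS n))
      = |D1 n| / N * |c| * Real.sqrt (w ⬝ᵥ w) := by
    rw [hdiff]
    have : ((-(D1 n / N) * c) • w) ⬝ᵥ ((-(D1 n / N) * c) • w)
        = ((D1 n / N) * c) ^ 2 * (w ⬝ᵥ w) := by
      rw [smul_dotProduct, dotProduct_smul, smul_eq_mul, smul_eq_mul]
      ring
    rw [this, Real.sqrt_mul (sq_nonneg _), Real.sqrt_sq_eq_abs, abs_mul, abs_div, abs_of_pos hNpos]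
  have hcabs : |c| ≤ (D2 n / N) * (s * (s / lam)) := by
    rw [hc, abs_mul, abs_of_nonneg (div_nonneg (hD2nonneg n) hNpos.le)]
    exact mul_le_mul_of_nonneg_left hvu (div_nonneg (hD2nonneg n) hNpos.le)
  have hwbnn : 0 ≤ Real.sqrt (w ⬝ᵥ w) := Real.sqrt_nonneg _
  have main1 : Real.sqrt ((θIJ n - θNS n) ⬝ᵥ (θIJ n - θNS n)) ≤
      1 / (N ^ 2 * lam ^ 2) * (|D1 n| * D2 n * s ^ 3) := by
    rw [hnormdiff]
    calc |D1 n| / N * |c| * Real.sqrt (w ⬝ᵥ w)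
        ≤ |D1 n| / N * ((D2 n / N) * (s * (s / lam))) * (s / lam) := by
          have h1 : |D1 n| / N * |c| ≤ |D1 n| / N * ((D2 n / N) * (s * (s / lam))) :=
            mul_le_mul_of_nonneg_left hcabs (div_nonneg (abs_nonneg _) hNpos.le)
          have h2 : 0 ≤ |D1 n| / N * ((D2 n / N) * (s * (s / lam))) :=
            mul_nonneg (div_nonneg (abs_nonneg _) hNpos.le)
              (mul_nonneg (div_nonneg (hD2nonneg n) hNpos.le)
                (mul_nonneg hsnn (div_nonneg hsnn hlam.le)))
          calc |D1 n| / N * |c| * Real.sqrt (w ⬝ᵥ w)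
              ≤ |D1 n| / N * ((D2 n / N) * (s * (s / lam))) * Real.sqrt (w ⬝ᵥ w) :=
                mul_le_mul_of_nonneg_right h1 hwbnn
            _ ≤ _ := mul_le_mul_of_nonneg_left hwb h2
      _ = 1 / (N ^ 2 * lam ^ 2) * (|D1 n| * D2 n * s ^ 3) := by
          field_simp
  refine ⟨main1, ?_⟩
  have hdot : x n ⬝ᵥ θIJ n - x n ⬝ᵥ θNS n = v ⬝ᵥ (θIJ n - θNS n) := by
    rw [dotProduct_sub]
  rw [hdot]
  calc |v ⬝ᵥ (θIJ n - θNS n)|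
      ≤ s * Real.sqrt ((θIJ n - θNS n) ⬝ᵥ (θIJ n - θNS n)) := aux_abs_dot_le v _
    _ ≤ s * (1 / (N ^ 2 * lam ^ 2) * (|D1 n| * D2 n * s ^ 3)) :=
        mul_le_mul_of_nonneg_left main1 hsnn
    _ = 1 / (N ^ 2 * lam ^ 2) * (|D1 n| * D2 n * (s ^ 2) ^ 2) := by ring
    _ = 1 / (N ^ 2 * lam ^ 2) * (|D1 n| * D2 n * (v ⬝ᵥ v) ^ 2) := by rw [hs2]
end

section
/- For every n = 1, …, N, L_n ≤ M_n, where M_n := (max_{z ∈ 𝒵_n} |∂₁³ f(z, y_n)|) · ((1/N) Σ_{m≠n} ‖x_m‖₂²) and 𝒵_n := { z ∈ ℝ : |z| ≤ |x_nᵀθ̂| + |D_n^{(1)}| · ‖x_n‖₂² / (N λ) }. -/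
open Matrix BigOperators RealInnerProductSpace

lemma convex_first_order {g : ℝ → ℝ} (hg : ConvexOn ℝ Set.univ g) {g' b : ℝ}
    (hd : HasDerivAt g g' b) (a : ℝ) : g b + g' * (a - b) ≤ g a := by
  rcases lt_trichotomy a b with h | h | h
  · have := hg.slope_le_of_hasDerivAt (Set.mem_univ a) (Set.mem_univ b) h hd
    rw [slope_def_field, div_le_iff₀ (by linarith)] at this
    nlinarith
  · simp [h]
  · have := hg.le_slope_of_hasDerivAt (Set.mem_univ b) (Set.mem_univ a) h hd
    rw [slope_def_field, le_div_iff₀ (by linarith)] at this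
    nlinarith

lemma convexOn_finset_sum {ι : Type*} (s : Finset ι) (g : ι → ℝ → ℝ)
    (h : ∀ m ∈ s, ConvexOn ℝ Set.univ (g m)) :
    ConvexOn ℝ Set.univ (fun t => ∑ m ∈ s, g m t) := by
  classical
  induction s using Finset.induction with
  | empty => simpa using convexOn_const (0:ℝ) convex_univ
  | @insert a s' hx ih =>
    simp only [Finset.sum_insert hx]
    exact (h a (Finset.mem_insert_self a s')).add (ih fun m hm => h m (Finset.mem_insert_of_mem hm))

lemma convexOn_affine_comp {g : ℝ → ℝ} (hg : ConvexOn ℝ Set.univ g) (a b : ℝ) :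
    ConvexOn ℝ Set.univ (fun t => g (a + t * b)) := by
  refine ⟨convex_univ, fun t _ s _ p q hp hq hpq => ?_⟩
  simp only [smul_eq_mul]
  have h2 : a + (p * t + q * s) * b = p * (a + t * b) + q * (a + s * b) := by
    linear_combination (-a) * hpq
  rw [h2]
  have := hg.2 (Set.mem_univ (a + t*b)) (Set.mem_univ (a + s*b)) hp hq hpq
  simpa using this

lemma hasDerivAt_affine_comp {g : ℝ → ℝ} (hg : Differentiable ℝ g) (a b t : ℝ) :
    HasDerivAt (fun t => g (a + t * b)) (deriv g (a + t * b) * b) t := by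
  have h1 : HasDerivAt (fun t : ℝ => a + t * b) b t := by
    simpa using ((hasDerivAt_id t).mul_const b).const_add a
  exact ((hg (a + t * b)).hasDerivAt).comp t h1

lemma core_loo (C u : ℝ → ℝ) (C' : ℝ → ℝ) (lam p0 p1 e u'0 : ℝ)
    (hC : ConvexOn ℝ Set.univ C) (hC'd : ∀ t, HasDerivAt C (C' t) t)
    (hu : HasDerivAt u u'0 0)
    (hmin0 : ∀ t : ℝ, C 0 + u 0 + lam/2*(p0+2*p1*0+e*0^2) ≤ C t + u t + lam/2*(p0+2*p1*t+e*t^2))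
    (hmin1 : ∀ t : ℝ, C 1 + lam/2*(p0+2*p1*1+e*1^2) ≤ C t + lam/2*(p0+2*p1*t+e*t^2)) :
    lam * e ≤ u'0 := by
  have hq : ∀ t : ℝ, HasDerivAt (fun t : ℝ => lam/2*(p0+2*p1*t+e*t^2)) (lam*(p1+e*t)) t := by
    intro t
    have h1 : HasDerivAt (fun t : ℝ => p0+2*p1*t+e*t^2) (2*p1 + e*(2*t)) t := by
      have := (((hasDerivAt_id t).const_mul (2*p1)).const_add p0).add
        ((hasDerivAt_pow 2 t).const_mul e)
      exact this.congr_deriv (by ring)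
    have := h1.const_mul (lam/2)
    exact this.congr_deriv (by ring)
  have hΦ : HasDerivAt (fun t => C t + u t + lam/2*(p0+2*p1*t+e*t^2))
      (C' 0 + u'0 + lam*(p1+e*0)) 0 := ((hC'd 0).add hu).add (hq 0)
  have hΨ : HasDerivAt (fun t => C t + lam/2*(p0+2*p1*t+e*t^2))
      (C' 1 + lam*(p1+e*1)) 1 := (hC'd 1).add (hq 1)
  have hm0 : IsLocalMin (fun t => C t + u t + lam/2*(p0+2*p1*t+e*t^2)) 0 :=
    Filter.Eventually.of_forall (fun t => hmin0 t)
  have hm1 : IsLocalMin (fun t => C t + lam/2*(p0+2*p1*t+e*t^2)) 1 :=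
    Filter.Eventually.of_forall (fun t => hmin1 t)
  have e0 : C' 0 + u'0 + lam*(p1+e*0) = 0 := by
    rw [← hΦ.deriv]; exact hm0.deriv_eq_zero
  have e1 : C' 1 + lam*(p1+e*1) = 0 := by
    rw [← hΨ.deriv]; exact hm1.deriv_eq_zero
  have i1 := convex_first_order hC (hC'd 0) 1
  have i2 := convex_first_order hC (hC'd 1) 0
  linarith

theorem stmt_11
    (N D : ℕ) (hN : 1 ≤ N) (hD : 1 ≤ D)
    (x : Fin N → Fin D → ℝ) (y : Fin N → ℝ)
    (lam : ℝ) (hlam : 0 < lam)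
    (f : ℝ → ℝ → ℝ)
    (hconv : ∀ c : ℝ, ConvexOn ℝ Set.univ (fun z => f z c))
    (hsmooth : ∀ c : ℝ, ContDiff ℝ 3 (fun z => f z c))
    (F : (Fin D → ℝ) → ℝ)
    (hF : F = fun θ => (1 / N : ℝ) * ∑ n, f (x n ⬝ᵥ θ) (y n) + lam / 2 * (θ ⬝ᵥ θ))
    (Floo : Fin N → (Fin D → ℝ) → ℝ)
    (hFloo : ∀ n, Floo n = fun θ =>
      (1 / N : ℝ) * ∑ m ∈ Finset.univ.erase n, f (x m ⬝ᵥ θ) (y m) + lam / 2 * (θ ⬝ᵥ θ))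
    (θhat : Fin D → ℝ)
    (hθhat : ∀ θ, F θhat ≤ F θ)
    (hθhatU : ∀ θ, (∀ θ', F θ ≤ F θ') → θ = θhat)
    (θloo : Fin N → Fin D → ℝ)
    (hθloo : ∀ n θ, Floo n (θloo n) ≤ Floo n θ)
    (hθlooU : ∀ n θ, (∀ θ', Floo n θ ≤ Floo n θ') → θ = θloo n)
    (D1 : Fin N → ℝ)
    (hD1 : ∀ n, D1 n = deriv (fun z => f z (y n)) (x n ⬝ᵥ θhat))
    (L : Fin N → ℝ)
    (hL : ∀ n, L n = ((1 / N : ℝ) * ∑ m ∈ Finset.univ.erase n, x m ⬝ᵥ x m) *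
      sSup ((fun s : ℝ =>
        |iteratedDeriv 3 (fun z => f z (y n)) (x n ⬝ᵥ ((1 - s) • θhat + s • θloo n))|) ''
        Set.Icc (0 : ℝ) 1))
    :
    ∀ n : Fin N,
      L n ≤
        sSup ((fun z : ℝ => |iteratedDeriv 3 (fun w => f w (y n)) z|) ''
            {z : ℝ | |z| ≤ |x n ⬝ᵥ θhat| + |D1 n| * (x n ⬝ᵥ x n) / (N * lam)}) *
          ((1 / N : ℝ) * ∑ m ∈ Finset.univ.erase n, x m ⬝ᵥ x m) := by
  intro n
  have hNpos : (0:ℝ) < N := by exact_mod_cast Nat.lt_of_lt_of_le Nat.zero_lt_one hN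
  -- setup
  set d : Fin D → ℝ := θloo n - θhat with hd
  have hdot : ∀ (m : Fin N) (t : ℝ), x m ⬝ᵥ (θhat + t • d) = x m ⬝ᵥ θhat + t * (x m ⬝ᵥ d) := by
    intro m t
    simp [dotProduct_add, dotProduct_smul, smul_eq_mul]
  have hquad : ∀ t : ℝ, (θhat + t • d) ⬝ᵥ (θhat + t • d) =
      (θhat ⬝ᵥ θhat) + 2 * (θhat ⬝ᵥ d) * t + (d ⬝ᵥ d) * t^2 := by
    intro t
    simp [dotProduct_add, add_dotProduct, dotProduct_smul, smul_dotProduct, smul_eq_mul,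
      dotProduct_comm d θhat]
    ring
  have hdf : Differentiable ℝ (fun z => f z (y n)) := (hsmooth (y n)).differentiable (by norm_num)
  -- the core inequality : lam * (d ⬝ᵥ d) ≤ (1/N) * (D1 n * (x n ⬝ᵥ d))
  have hcore : lam * (d ⬝ᵥ d) ≤ (1/N : ℝ) * (D1 n * (x n ⬝ᵥ d)) := by
    have hCconv : ConvexOn ℝ Set.univ
        (fun t => (1/N : ℝ) * ∑ m ∈ Finset.univ.erase n,
          f (x m ⬝ᵥ θhat + t * (x m ⬝ᵥ d)) (y m)) := by
      have := convexOn_finset_sum (Finset.univ.erase n)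
        (fun m t => f (x m ⬝ᵥ θhat + t * (x m ⬝ᵥ d)) (y m))
        (fun m _ => convexOn_affine_comp (hconv (y m)) _ _)
      have h2 := this.smul (c := (1/N : ℝ)) (by positivity)
      simpa [smul_eq_mul] using h2
    have hC'd : ∀ t : ℝ, HasDerivAt
        (fun t => (1/N : ℝ) * ∑ m ∈ Finset.univ.erase n,
          f (x m ⬝ᵥ θhat + t * (x m ⬝ᵥ d)) (y m))
        ((1/N : ℝ) * ∑ m ∈ Finset.univ.erase n,
          (deriv (fun z => f z (y m)) (x m ⬝ᵥ θhat + t * (x m ⬝ᵥ d)) * (x m ⬝ᵥ d))) t := by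
      intro t
      have := HasDerivAt.fun_sum
        (fun (m : Fin N) (_ : m ∈ Finset.univ.erase n) => hasDerivAt_affine_comp
          (g := fun z => f z (y m))
          ((hsmooth (y m)).differentiable (by norm_num)) (x m ⬝ᵥ θhat) (x m ⬝ᵥ d) t)
      exact this.const_mul _
    have hu : HasDerivAt (fun t => (1/N : ℝ) * f (x n ⬝ᵥ θhat + t * (x n ⬝ᵥ d)) (y n))
        ((1/N : ℝ) * (D1 n * (x n ⬝ᵥ d))) 0 := by
      have h1 := hasDerivAt_affine_comp (g := fun z => f z (y n)) hdf
        (x n ⬝ᵥ θhat) (x n ⬝ᵥ d) 0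
      have h2 := h1.const_mul (1/N : ℝ)
      simpa [hD1 n] using h2
    have keyF : ∀ s : ℝ, F (θhat + s • d) =
        ((1/N : ℝ) * ∑ m ∈ Finset.univ.erase n, f (x m ⬝ᵥ θhat + s * (x m ⬝ᵥ d)) (y m))
        + ((1/N : ℝ) * f (x n ⬝ᵥ θhat + s * (x n ⬝ᵥ d)) (y n))
        + lam/2*((θhat ⬝ᵥ θhat) + 2*(θhat ⬝ᵥ d)*s + (d ⬝ᵥ d)*s^2) := by
      intro s
      rw [hF]
      simp only [hdot, hquad]
      rw [← Finset.sum_erase_add _ _ (Finset.mem_univ n)]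
      ring
    have keyFl : ∀ s : ℝ, Floo n (θhat + s • d) =
        ((1/N : ℝ) * ∑ m ∈ Finset.univ.erase n, f (x m ⬝ᵥ θhat + s * (x m ⬝ᵥ d)) (y m))
        + lam/2*((θhat ⬝ᵥ θhat) + 2*(θhat ⬝ᵥ d)*s + (d ⬝ᵥ d)*s^2) := by
      intro s
      rw [hFloo n]
      simp only [hdot, hquad]
      try ring
    refine core_loo _ _ _ lam (θhat ⬝ᵥ θhat) (θhat ⬝ᵥ d) (d ⬝ᵥ d) _ hCconv hC'd hu ?_ ?_
    · intro t
      rw [← keyF 0, ← keyF t, show θhat + (0:ℝ) • d = θhat by simp]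
      exact hθhat _
    · intro t
      rw [← keyFl 1, ← keyFl t, show θhat + (1:ℝ) • d = θloo n by simp [hd]]
      exact hθloo n _
  -- consequences
  have hxx : (0:ℝ) ≤ x n ⬝ᵥ x n := Finset.sum_nonneg fun i _ => mul_self_nonneg _
  have he : (0:ℝ) ≤ d ⬝ᵥ d := Finset.sum_nonneg fun i _ => mul_self_nonneg _
  have hCS : (x n ⬝ᵥ d)^2 ≤ (x n ⬝ᵥ x n) * (d ⬝ᵥ d) := by
    have h := Finset.sum_mul_sq_le_sq_mul_sq Finset.univ (x n) d
    simpa only [dotProduct, pow_two] using h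
  have hNlam : (0:ℝ) < (N:ℝ) * lam := by positivity
  have hbn : |x n ⬝ᵥ d| ≤ |D1 n| * (x n ⬝ᵥ x n) / ((N:ℝ) * lam) := by
    rw [le_div_iff₀ hNlam]
    rcases eq_or_ne (x n ⬝ᵥ d) 0 with h | h
    · rw [h]; simp; positivity
    · have hbpos : 0 < |x n ⬝ᵥ d| := abs_pos.2 h
      have h1 : lam * (d ⬝ᵥ d) ≤ (1/N : ℝ) * (|D1 n| * |x n ⬝ᵥ d|) := by
        refine hcore.trans ?_
        have : D1 n * (x n ⬝ᵥ d) ≤ |D1 n| * |x n ⬝ᵥ d| := by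
          rw [← abs_mul]; exact le_abs_self _
        exact mul_le_mul_of_nonneg_left this (by positivity)
      have h2 : (d ⬝ᵥ d) * ((N:ℝ) * lam) ≤ |D1 n| * |x n ⬝ᵥ d| := by
        have h3 : (N:ℝ) * (lam * (d ⬝ᵥ d)) ≤ (N:ℝ) * ((1/N : ℝ) * (|D1 n| * |x n ⬝ᵥ d|)) :=
          mul_le_mul_of_nonneg_left h1 (le_of_lt hNpos)
        have h4 : (N:ℝ) * ((1/N : ℝ) * (|D1 n| * |x n ⬝ᵥ d|)) = |D1 n| * |x n ⬝ᵥ d| := by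
          field_simp
        linarith [h3]
      have h5 : |x n ⬝ᵥ d| * ((N:ℝ)*lam) * |x n ⬝ᵥ d| ≤ |D1 n| * (x n ⬝ᵥ x n) * |x n ⬝ᵥ d| := by
        nlinarith [sq_abs (x n ⬝ᵥ d), hCS, h2, hxx, abs_nonneg (D1 n)]
      exact le_of_mul_le_mul_right h5 hbpos
  -- line points lie in the interval
  have hline : ∀ s : ℝ, (1 - s) • θhat + s • θloo n = θhat + s • d := by
    intro s; funext i
    simp only [Pi.add_apply, Pi.smul_apply, Pi.sub_apply, hd, smul_eq_mul]
    ring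
  have hmem : ∀ s ∈ Set.Icc (0:ℝ) 1,
      (x n ⬝ᵥ ((1 - s) • θhat + s • θloo n)) ∈
      {z : ℝ | |z| ≤ |x n ⬝ᵥ θhat| + |D1 n| * (x n ⬝ᵥ x n) / (N * lam)} := by
    rintro s ⟨hs0, hs1⟩
    rw [hline s, hdot n s]
    have h1 : |x n ⬝ᵥ θhat + s * (x n ⬝ᵥ d)| ≤ |x n ⬝ᵥ θhat| + |s * (x n ⬝ᵥ d)| := abs_add_le _ _
    have h2 : |s * (x n ⬝ᵥ d)| = s * |x n ⬝ᵥ d| := by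
      rw [abs_mul, abs_of_nonneg hs0]
    have h3 : s * |x n ⬝ᵥ d| ≤ |x n ⬝ᵥ d| := by
      nlinarith [abs_nonneg (x n ⬝ᵥ d)]
    simp only [Set.mem_setOf_eq]
    linarith [hbn]
  -- sup comparison
  have hR : (0:ℝ) ≤ |x n ⬝ᵥ θhat| + |D1 n| * (x n ⬝ᵥ x n) / (N * lam) := by positivity
  have hZ : {z : ℝ | |z| ≤ |x n ⬝ᵥ θhat| + |D1 n| * (x n ⬝ᵥ x n) / (N * lam)} =
      Set.Icc (-(|x n ⬝ᵥ θhat| + |D1 n| * (x n ⬝ᵥ x n) / (N * lam)))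
        (|x n ⬝ᵥ θhat| + |D1 n| * (x n ⬝ᵥ x n) / (N * lam)) := by
    ext z; simp only [Set.mem_setOf_eq, Set.mem_Icc]; exact abs_le
  have hcont : Continuous (fun z : ℝ => |iteratedDeriv 3 (fun w => f w (y n)) z|) :=
    ((hsmooth (y n)).continuous_iteratedDeriv 3 (by norm_num)).abs
  have hbdd : BddAbove ((fun z : ℝ => |iteratedDeriv 3 (fun w => f w (y n)) z|) ''
      {z : ℝ | |z| ≤ |x n ⬝ᵥ θhat| + |D1 n| * (x n ⬝ᵥ x n) / (N * lam)}) := by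
    rw [hZ]
    exact (isCompact_Icc.image hcont).bddAbove
  have hne : ((fun s : ℝ =>
      |iteratedDeriv 3 (fun z => f z (y n)) (x n ⬝ᵥ ((1 - s) • θhat + s • θloo n))|) ''
      Set.Icc (0 : ℝ) 1).Nonempty := ⟨_, ⟨0, ⟨le_refl 0, zero_le_one⟩, rfl⟩⟩
  have hsub : ((fun s : ℝ =>
      |iteratedDeriv 3 (fun z => f z (y n)) (x n ⬝ᵥ ((1 - s) • θhat + s • θloo n))|) ''
      Set.Icc (0 : ℝ) 1) ⊆ ((fun z : ℝ => |iteratedDeriv 3 (fun w => f w (y n)) z|) ''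
      {z : ℝ | |z| ≤ |x n ⬝ᵥ θhat| + |D1 n| * (x n ⬝ᵥ x n) / (N * lam)}) := by
    rintro _ ⟨s, hs, rfl⟩
    exact ⟨x n ⬝ᵥ ((1 - s) • θhat + s • θloo n), hmem s hs, rfl⟩
  have hsup := csSup_le_csSup hbdd hne hsub
  have hc : (0:ℝ) ≤ (1 / N : ℝ) * ∑ m ∈ Finset.univ.erase n, x m ⬝ᵥ x m := by
    apply mul_nonneg (by positivity)
    exact Finset.sum_nonneg fun m _ => Finset.sum_nonneg fun i _ => mul_self_nonneg _
  rw [hL n, mul_comm]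
  exact mul_le_mul_of_nonneg_right hsup hc
end

section
/- Let λ > 0, let x_1, …, x_N ∈ ℝ^D with each x_n ≠ 0, let c_1, …, c_N ≥ 0, and set H = Σ_{m=1}^N c_m x_m x_mᵀ + λ I_D. Let B̃ ∈ ℝ^{D×D} be symmetric positive semidefinite, set H̃ = B̃ + λ I_D, and suppose 𝓑 ⊆ ℝ^D is a subspace with H v = H̃ v for all v ∈ 𝓑; let 𝓐 = H(𝓑). Define U_n = ‖x_n‖₂² / (λ + c_n ‖x_n‖₂²), Q_n = x_nᵀ H⁻¹ x_n, and Q̃_n = min{ x_nᵀ H̃⁻¹ x_n, U_n }. Then for every n, |Q̃_n − Q_n| ≤ min{ ‖P_{𝓐}^⊥ x_n‖₂² / λ, U_n }, where P_{𝓐}^⊥ denotes the orthogonal projection onto the orthogonal complement of 𝓐. -/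
open Matrix BigOperators RealInnerProductSpace

private lemma dot_symm_aux {D : ℕ} {A : Matrix (Fin D) (Fin D) ℝ} (hA : A.IsHermitian)
    (u v : Fin D → ℝ) : u ⬝ᵥ (A *ᵥ v) = (A *ᵥ u) ⬝ᵥ v := by
  rw [Matrix.dotProduct_mulVec, ← Matrix.mulVec_transpose,
    ← Matrix.conjTranspose_eq_transpose_of_trivial, hA.eq]

private lemma vecMulVec_mulVec_aux {D : ℕ} (u z : Fin D → ℝ) :
    (Matrix.vecMulVec u u) *ᵥ z = (u ⬝ᵥ z) • u := by
  ext i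
  simp only [Matrix.mulVec, Matrix.vecMulVec_apply, dotProduct, Pi.smul_apply,
    smul_eq_mul, Finset.sum_mul, Finset.mul_sum]
  exact Finset.sum_congr rfl fun j _ => by ring

private lemma sum_mulVec_aux {D : ℕ} {ι : Type*} (s : Finset ι)
    (A : ι → Matrix (Fin D) (Fin D) ℝ) (z : Fin D → ℝ) :
    (∑ m ∈ s, A m) *ᵥ z = ∑ m ∈ s, (A m *ᵥ z) := by
  ext i
  simp only [Matrix.mulVec, dotProduct, Matrix.sum_apply, Finset.sum_apply,
    Finset.sum_mul]
  exact Finset.sum_comm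

private lemma dot_sum_aux {D : ℕ} {ι : Type*} (s : Finset ι)
    (z : Fin D → ℝ) (w : ι → Fin D → ℝ) :
    z ⬝ᵥ (∑ m ∈ s, w m) = ∑ m ∈ s, z ⬝ᵥ w m := by
  simp only [dotProduct, Finset.sum_apply, Finset.mul_sum]
  exact Finset.sum_comm

private lemma norm_sq_dot_aux {D : ℕ} (v : EuclideanSpace ℝ (Fin D)) :
    ‖v‖ ^ 2 = v ⬝ᵥ v := by
  rw [← real_inner_self_eq_norm_sq]
  simp [PiLp.inner_apply, RCLike.inner_apply, dotProduct]
  rw [EuclideanSpace.norm_sq_eq]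
  simp [sq]

private lemma quad_aux {D : ℕ} {lam : ℝ} (hlam : 0 < lam) {B K : Matrix (Fin D) (Fin D) ℝ}
    (hB : ∀ z : Fin D → ℝ, 0 ≤ z ⬝ᵥ (B *ᵥ z))
    (hK : K = B + lam • (1 : Matrix (Fin D) (Fin D) ℝ)) (hKu : IsUnit K.det)
    (w : Fin D → ℝ) :
    0 ≤ w ⬝ᵥ (K⁻¹ *ᵥ w) ∧ lam * (w ⬝ᵥ (K⁻¹ *ᵥ w)) ≤ w ⬝ᵥ w := by
  set z := K⁻¹ *ᵥ w with hz
  have hw : K *ᵥ z = w := by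
    rw [hz, Matrix.mulVec_mulVec, Matrix.mul_nonsing_inv _ hKu, Matrix.one_mulVec]
  have hKz : K *ᵥ z = B *ᵥ z + lam • z := by
    rw [hK, Matrix.add_mulVec, Matrix.smul_mulVec, Matrix.one_mulVec]
  have hcomm : (B *ᵥ z) ⬝ᵥ z = z ⬝ᵥ (B *ᵥ z) := dotProduct_comm _ _
  have h1 : w ⬝ᵥ z = z ⬝ᵥ (B *ᵥ z) + lam * (z ⬝ᵥ z) := by
    rw [← hw, hKz, add_dotProduct, smul_dotProduct, hcomm, smul_eq_mul]
  have h2 : w ⬝ᵥ w = (B *ᵥ z) ⬝ᵥ (B *ᵥ z) + 2 * lam * (z ⬝ᵥ (B *ᵥ z)) + lam ^ 2 * (z ⬝ᵥ z) := by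
    rw [← hw, hKz]
    simp only [add_dotProduct, dotProduct_add, smul_dotProduct,
      dotProduct_smul, smul_eq_mul, hcomm]
    ring
  have hBz := hB z
  have hzz : 0 ≤ z ⬝ᵥ z := by simpa using dotProduct_star_self_nonneg z
  have hBB : 0 ≤ (B *ᵥ z) ⬝ᵥ (B *ᵥ z) := by
    simpa using dotProduct_star_self_nonneg (B *ᵥ z)
  constructor
  · rw [h1]; positivity
  · rw [h1, h2]; nlinarith [mul_nonneg hlam.le hBz]

private lemma key_split_aux {D : ℕ} {A1 A2 : Matrix (Fin D) (Fin D) ℝ}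
    (hA1 : A1.IsHermitian) (hA2 : A2.IsHermitian) (pp qq : Fin D → ℝ)
    (he : A1 *ᵥ pp = A2 *ᵥ pp) :
    (pp + qq) ⬝ᵥ (A1 *ᵥ (pp + qq)) - (pp + qq) ⬝ᵥ (A2 *ᵥ (pp + qq))
      = qq ⬝ᵥ (A1 *ᵥ qq) - qq ⬝ᵥ (A2 *ᵥ qq) := by
  simp only [Matrix.mulVec_add, dotProduct_add, add_dotProduct]
  rw [dot_symm_aux hA1 pp qq, dot_symm_aux hA2 pp qq, he]
  ring

theorem stmt_15
    (N D : ℕ) (lam : ℝ) (hlam : 0 < lam)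
    (x : Fin N → EuclideanSpace ℝ (Fin D)) (hx : ∀ n, x n ≠ 0)
    (c : Fin N → ℝ) (hc : ∀ n, 0 ≤ c n)
    (H : Matrix (Fin D) (Fin D) ℝ)
    (hH : H = ∑ m, c m • Matrix.vecMulVec (x m) (x m) + lam • 1)
    (Bt : Matrix (Fin D) (Fin D) ℝ) (hBt : Bt.PosSemidef)
    (Ht : Matrix (Fin D) (Fin D) ℝ) (hHt : Ht = Bt + lam • 1)
    (𝓑 : Submodule ℝ (EuclideanSpace ℝ (Fin D)))
    (hagree : ∀ v ∈ 𝓑, H *ᵥ v = Ht *ᵥ v)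
    (𝓐 : Submodule ℝ (EuclideanSpace ℝ (Fin D)))
    (h𝓐 : 𝓐 = 𝓑.map (Matrix.toEuclideanLin H))
    (U Q Qt : Fin N → ℝ)
    (hU : ∀ n, U n = (x n ⬝ᵥ x n) / (lam + c n * (x n ⬝ᵥ x n)))
    (hQ : ∀ n, Q n = x n ⬝ᵥ (H⁻¹ *ᵥ x n))
    (hQt : ∀ n, Qt n = min (x n ⬝ᵥ (Ht⁻¹ *ᵥ x n)) (U n)) :
    ∀ n : Fin N,
      |Qt n - Q n| ≤
        min (‖(𝓐ᗮ.orthogonalProjectionOnto (x n) : EuclideanSpace ℝ (Fin D))‖ ^ 2 / lam) (U n) := by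
  classical
  set B : Matrix (Fin D) (Fin D) ℝ := ∑ m, c m • Matrix.vecMulVec (x m) (x m) with hBdef
  have hHB : H = B + lam • 1 := hH
  have hBmv : ∀ z : Fin D → ℝ, B *ᵥ z = ∑ m, (c m * (x m ⬝ᵥ z)) • (x m : Fin D → ℝ) := by
    intro z
    rw [hBdef, sum_mulVec_aux]
    refine Finset.sum_congr rfl fun m _ => ?_
    rw [Matrix.smul_mulVec, vecMulVec_mulVec_aux, smul_smul]
  have hBquad : ∀ z : Fin D → ℝ, z ⬝ᵥ (B *ᵥ z) = ∑ m, c m * (x m ⬝ᵥ z) ^ 2 := by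
    intro z
    rw [hBmv, dot_sum_aux]
    refine Finset.sum_congr rfl fun m _ => ?_
    rw [dotProduct_smul, smul_eq_mul, dotProduct_comm]
    ring
  have hBpos : ∀ z : Fin D → ℝ, 0 ≤ z ⬝ᵥ (B *ᵥ z) := by
    intro z
    rw [hBquad]
    exact Finset.sum_nonneg fun m _ => mul_nonneg (hc m) (sq_nonneg _)
  have hBtpos : ∀ z : Fin D → ℝ, 0 ≤ z ⬝ᵥ (Bt *ᵥ z) := by
    intro z
    simpa using hBt.dotProduct_mulVec_nonneg z
  have hone : (lam • (1 : Matrix (Fin D) (Fin D) ℝ)).PosDef := by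
    rw [Matrix.smul_one_eq_diagonal]
    exact Matrix.PosDef.diagonal fun _ => hlam
  have hBherm : B.IsHermitian := by
    rw [Matrix.IsHermitian, Matrix.conjTranspose_eq_transpose_of_trivial]
    ext i j
    simp only [Matrix.transpose_apply, hBdef, Matrix.sum_apply, Matrix.smul_apply,
      Matrix.vecMulVec_apply, smul_eq_mul]
    exact Finset.sum_congr rfl fun m _ => by ring
  have hBpsd : B.PosSemidef := Matrix.PosSemidef.of_dotProduct_mulVec_nonneg hBherm (fun z => by simpa using hBpos z)
  have hHpd : H.PosDef := by rw [hHB]; exact Matrix.PosDef.posSemidef_add hBpsd hone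
  have hHtpd : Ht.PosDef := by rw [hHt]; exact Matrix.PosDef.posSemidef_add hBt hone
  have hHu : IsUnit H.det := isUnit_iff_ne_zero.mpr hHpd.det_pos.ne'
  have hHtu : IsUnit Ht.det := isUnit_iff_ne_zero.mpr hHtpd.det_pos.ne'
  have hHinvherm : (H⁻¹).IsHermitian := hHpd.isHermitian.inv
  have hHtinvherm : (Ht⁻¹).IsHermitian := hHtpd.isHermitian.inv
  have hinv : ∀ p : EuclideanSpace ℝ (Fin D), p ∈ 𝓐 → H⁻¹ *ᵥ p = Ht⁻¹ *ᵥ p := by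
    intro p hp
    rw [h𝓐, Submodule.mem_map] at hp
    obtain ⟨v, hv, rfl⟩ := hp
    have hrep : (Matrix.toEuclideanLin H v : Fin D → ℝ) = H *ᵥ v := rfl
    have h1 : H⁻¹ *ᵥ (Matrix.toEuclideanLin H v : Fin D → ℝ) = v := by
      rw [hrep, Matrix.mulVec_mulVec, Matrix.nonsing_inv_mul _ hHu, Matrix.one_mulVec]
    have h2 : Ht⁻¹ *ᵥ (Matrix.toEuclideanLin H v : Fin D → ℝ) = v := by
      rw [hrep, hagree v hv, Matrix.mulVec_mulVec, Matrix.nonsing_inv_mul _ hHtu,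
        Matrix.one_mulVec]
    rw [h1, h2]
  intro n
  set q : EuclideanSpace ℝ (Fin D) :=
    (𝓐ᗮ.orthogonalProjectionOnto (x n) : EuclideanSpace ℝ (Fin D)) with hqdef
  set p : EuclideanSpace ℝ (Fin D) := x n - q with hpdef
  have hp𝓐 : p ∈ 𝓐 := by
    have h := Submodule.sub_starProjection_mem_orthogonal (K := 𝓐ᗮ) (x n)
    rwa [Submodule.starProjection_apply, Submodule.orthogonal_orthogonal] at h
  have hsum : (x n : Fin D → ℝ) = (p : Fin D → ℝ) + (q : Fin D → ℝ) := by
    rw [← WithLp.ofLp_add, hpdef, sub_add_cancel]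
  have hqH := quad_aux hlam hBpos hHB hHu (q : Fin D → ℝ)
  have hqHt := quad_aux hlam hBtpos hHt hHtu (q : Fin D → ℝ)
  have hxHt := quad_aux hlam hBtpos hHt hHtu (x n : Fin D → ℝ)
  have hxH := quad_aux hlam hBpos hHB hHu (x n : Fin D → ℝ)
  have e1 : Ht⁻¹ *ᵥ (p : Fin D → ℝ) = H⁻¹ *ᵥ (p : Fin D → ℝ) := (hinv p hp𝓐).symm
  have hkey : (x n : Fin D → ℝ) ⬝ᵥ (Ht⁻¹ *ᵥ x n) - (x n : Fin D → ℝ) ⬝ᵥ (H⁻¹ *ᵥ x n)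
      = (q : Fin D → ℝ) ⬝ᵥ (Ht⁻¹ *ᵥ q) - (q : Fin D → ℝ) ⬝ᵥ (H⁻¹ *ᵥ q) := by
    rw [hsum]
    exact key_split_aux hHtinvherm hHinvherm (p : Fin D → ℝ) (q : Fin D → ℝ) e1
  have hqq : ‖q‖ ^ 2 = (q : Fin D → ℝ) ⬝ᵥ q := norm_sq_dot_aux q
  have hxx : 0 < (x n : Fin D → ℝ) ⬝ᵥ (x n) := by
    rw [show (x n : Fin D → ℝ) ⬝ᵥ (x n) = ‖x n‖ ^ 2 from (norm_sq_dot_aux (x n)).symm]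
    exact pow_pos (norm_pos_iff.mpr (hx n)) 2
  have hden : 0 < lam + c n * ((x n : Fin D → ℝ) ⬝ᵥ (x n)) :=
    add_pos_of_pos_of_nonneg hlam (mul_nonneg (hc n) hxx.le)
  have hU0 : 0 ≤ U n := by
    rw [hU n]; exact div_nonneg hxx.le hden.le
  have hQ0 : 0 ≤ Q n := by rw [hQ n]; exact hxH.1
  have hQU : Q n ≤ U n := by
    set y : Fin D → ℝ := H⁻¹ *ᵥ (x n) with hydef
    have hwy : H *ᵥ y = (x n : Fin D → ℝ) := by
      rw [hydef, Matrix.mulVec_mulVec, Matrix.mul_nonsing_inv _ hHu, Matrix.one_mulVec]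
    have hQy : Q n = (x n : Fin D → ℝ) ⬝ᵥ y := hQ n
    have hform : (x n : Fin D → ℝ) ⬝ᵥ y = ∑ m, c m * ((x m : Fin D → ℝ) ⬝ᵥ y) ^ 2
        + lam * (y ⬝ᵥ y) := by
      conv_lhs => rw [← hwy]
      rw [hHB, Matrix.add_mulVec, Matrix.smul_mulVec, Matrix.one_mulVec,
        add_dotProduct, smul_dotProduct, smul_eq_mul,
        dotProduct_comm _ y, hBquad]
    have hterm : c n * ((x n : Fin D → ℝ) ⬝ᵥ y) ^ 2
        ≤ ∑ m, c m * ((x m : Fin D → ℝ) ⬝ᵥ y) ^ 2 :=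
      Finset.single_le_sum (f := fun m => c m * ((x m : Fin D → ℝ) ⬝ᵥ y) ^ 2)
        (fun m _ => mul_nonneg (hc m) (sq_nonneg _)) (Finset.mem_univ n)
    have hyy : 0 ≤ y ⬝ᵥ y := by simpa using dotProduct_star_self_nonneg y
    have hCS : ((x n : Fin D → ℝ) ⬝ᵥ y) ^ 2 ≤ ((x n : Fin D → ℝ) ⬝ᵥ (x n)) * (y ⬝ᵥ y) := by
      have h := Finset.sum_mul_sq_le_sq_mul_sq Finset.univ (x n : Fin D → ℝ) y
      simpa [dotProduct, sq] using h
    have hge : c n * (Q n) ^ 2 + lam * (y ⬝ᵥ y) ≤ Q n := by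
      calc c n * (Q n) ^ 2 + lam * (y ⬝ᵥ y)
          = c n * ((x n : Fin D → ℝ) ⬝ᵥ y) ^ 2 + lam * (y ⬝ᵥ y) := by rw [hQy]
        _ ≤ ∑ m, c m * ((x m : Fin D → ℝ) ⬝ᵥ y) ^ 2 + lam * (y ⬝ᵥ y) := by linarith
        _ = (x n : Fin D → ℝ) ⬝ᵥ y := hform.symm
        _ = Q n := hQy.symm
    rw [hU n, le_div_iff₀ hden]
    rcases eq_or_lt_of_le hQ0 with h0 | hpos
    · rw [← h0, zero_mul]; exact hxx.le
    · have hCS' : (Q n) ^ 2 ≤ ((x n : Fin D → ℝ) ⬝ᵥ (x n)) * (y ⬝ᵥ y) := by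
        rw [hQy]; exact hCS
      nlinarith [mul_le_mul_of_nonneg_left hge hxx.le,
        mul_le_mul_of_nonneg_left hCS' hlam.le, hpos, mul_pos hpos hpos]
  -- final combination
  have ht1 : 0 ≤ (q : Fin D → ℝ) ⬝ᵥ (H⁻¹ *ᵥ q) := hqH.1
  have ht2 : 0 ≤ (q : Fin D → ℝ) ⬝ᵥ (Ht⁻¹ *ᵥ q) := hqHt.1
  have ht1' : (q : Fin D → ℝ) ⬝ᵥ (H⁻¹ *ᵥ q) ≤ ‖q‖ ^ 2 / lam := by
    rw [le_div_iff₀ hlam, hqq]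
    linarith [hqH.2]
  have ht2' : (q : Fin D → ℝ) ⬝ᵥ (Ht⁻¹ *ᵥ q) ≤ ‖q‖ ^ 2 / lam := by
    rw [le_div_iff₀ hlam, hqq]
    linarith [hqHt.2]
  have hE0 : 0 ≤ ‖q‖ ^ 2 / lam := le_trans ht1 ht1'
  have ha0 : 0 ≤ (x n : Fin D → ℝ) ⬝ᵥ (Ht⁻¹ *ᵥ x n) := hxHt.1
  have haQ : |(x n : Fin D → ℝ) ⬝ᵥ (Ht⁻¹ *ᵥ x n) - Q n| ≤ ‖q‖ ^ 2 / lam := by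
    rw [hQ n, abs_le]
    constructor <;> linarith [hkey, ht1, ht2, ht1', ht2']
  rw [hQt n, le_min_iff]
  constructor
  · rcases le_total ((x n : Fin D → ℝ) ⬝ᵥ (Ht⁻¹ *ᵥ x n)) (U n) with h | h
    · rw [min_eq_left h]; exact haQ
    · rw [min_eq_right h, abs_le]
      have h1 := (abs_le.mp haQ).1
      have h2 := (abs_le.mp haQ).2
      constructor <;> linarith
  · rw [abs_le]
    have hmin1 : 0 ≤ min ((x n : Fin D → ℝ) ⬝ᵥ (Ht⁻¹ *ᵥ x n)) (U n) := le_min ha0 hU0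
    have hmin2 : min ((x n : Fin D → ℝ) ⬝ᵥ (Ht⁻¹ *ᵥ x n)) (U n) ≤ U n := min_le_right _ _
    constructor <;> linarith
end
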